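/- Let m ≥ 0 and r ≥ 0 be integers, let ℓ_1, ℓ_2, ℓ_3 ∈ ℝ[x,y] be polynomials of total degree 1, and let J_1, J_2, J_3 be ℝ-subspaces of P_m such that ⟨ℓ_i^{r+1}⟩_m + ⟨ℓ_{i+1}^{r+1}⟩_m ⊆ J_i for i = 1, 2, 3 (indices cyclic modulo 3). Then the linear map φ : ⊕_{i=1}^{3} P_m/⟨ℓ_i^{r+1}⟩_m → ⊕_{i=1}^{3} P_m/J_i induced by the matrix [[−1,1,0],[0,−1,1],[1,0,−1]] (i.e. sending (f_1, f_2, f_3) to (f_2 − f_1 mod J_1, f_3 − f_2 mod J_2, f_1 − f_3 mod J_3)) is well defined, and its cokernel is isomorphic as an ℝ-vector space to P_m/(J_1 + J_2 + J_3). -/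

import Mathlib

open MvPolynomial

noncomputable section

/-- Bivariate real polynomials. -/
abbrev Pol := MvPolynomial (Fin 2) ℝ

/-- `Pm m`: the subspace of polynomials of total degree at most `m`. -/
def Pm (m : ℕ) : Submodule ℝ Pol := MvPolynomial.restrictTotalDegree (Fin 2) ℝ m

/-- `Pm e` for an integer `e`, with the convention `Pm e = 0` for `e < 0`. -/
def Pz (e : ℤ) : Submodule ℝ Pol := if e < 0 then ⊥ else Pm e.toNat

/-- `⟨f⟩ₘ` for `f` of degree `d`: the subspace `f · P (m - d)` of all products
`f * g` with `g` of total degree at most `m - d`. -/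
def piece (f : Pol) (d m : ℕ) : Submodule ℝ Pol :=
  (Pz ((m : ℤ) - (d : ℤ))).map (LinearMap.mulLeft ℝ f)

set_option maxHeartbeats 1000000

/-- For `ℓ₁, ℓ₂, ℓ₃` of total degree 1 and subspaces `Jᵢ ⊆ Pₘ` with
`⟨ℓᵢ^{r+1}⟩ₘ + ⟨ℓᵢ₊₁^{r+1}⟩ₘ ⊆ Jᵢ` (indices cyclic mod 3), the map
`φ : ⊕ᵢ Pₘ/⟨ℓᵢ^{r+1}⟩ₘ → ⊕ᵢ Pₘ/Jᵢ` induced by the matrix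
`[[−1,1,0],[0,−1,1],[1,0,−1]]` is well defined, and its cokernel is isomorphic to
`Pₘ/(J₁+J₂+J₃)`. -/
theorem stmt1 (m r : ℕ) (ℓ : Fin 3 → Pol) (hdeg : ∀ i, (ℓ i).totalDegree = 1)
    (J : Fin 3 → Submodule ℝ ↥(Pm m))
    (hJ : ∀ i : Fin 3,
      (piece (ℓ i ^ (r + 1)) (r + 1) m).comap (Pm m).subtype ⊔
        (piece (ℓ (i + 1) ^ (r + 1)) (r + 1) m).comap (Pm m).subtype ≤ J i) :
    ∃ φ : ((i : Fin 3) → ↥(Pm m) ⧸ (piece (ℓ i ^ (r + 1)) (r + 1) m).comap (Pm m).subtype)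
        →ₗ[ℝ] ((i : Fin 3) → ↥(Pm m) ⧸ J i),
      (∀ f : (i : Fin 3) → ↥(Pm m),
        φ (fun i => Submodule.Quotient.mk (f i)) =
          fun i => Submodule.Quotient.mk (f (i + 1) - f i)) ∧
      Nonempty ((@HasQuotient.Quotient ((i : Fin 3) → ↥(Pm m) ⧸ J i) _
          (@Submodule.hasQuotient ℝ _ _ (@Pi.addCommGroup _ _ (fun i => Submodule.Quotient.addCommGroup (J i)))
            (@Pi.module (Fin 3) _ ℝ _ (fun i => (Submodule.Quotient.addCommGroup (J i)).toAddCommMonoid)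
              (fun i => Submodule.Quotient.module (J i))))
          (LinearMap.range φ :)) ≃ₗ[ℝ]
        (↥(Pm m) ⧸ (J 0 ⊔ J 1 ⊔ J 2))) := by
  classical
  set K : Fin 3 → Submodule ℝ ↥(Pm m) :=
    fun i => (piece (ℓ i ^ (r + 1)) (r + 1) m).comap (Pm m).subtype with hK
  have hKJ : ∀ i, K i ≤ (J i).comap (LinearMap.id) := fun i => le_sup_left.trans (hJ i)
  have hKJ' : ∀ i, K (i + 1) ≤ (J i).comap (LinearMap.id) := fun i => le_sup_right.trans (hJ i)
  set φ : ((i : Fin 3) → ↥(Pm m) ⧸ K i) →ₗ[ℝ] ((i : Fin 3) → ↥(Pm m) ⧸ J i) :=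
    LinearMap.pi (fun i =>
      (Submodule.mapQ (K (i + 1)) (J i) LinearMap.id (hKJ' i)).comp (LinearMap.proj (i + 1))
      - (Submodule.mapQ (K i) (J i) LinearMap.id (hKJ i)).comp (LinearMap.proj i)) with hφ
  have hφ_apply : ∀ f : (i : Fin 3) → ↥(Pm m),
      φ (fun i => Submodule.Quotient.mk (f i)) =
        fun i => Submodule.Quotient.mk (f (i + 1) - f i) := by
    intro f
    funext i
    simp [hφ, Submodule.Quotient.mk_sub, Submodule.mapQ_apply]
  refine ⟨φ, hφ_apply, ?_⟩
  set S : Submodule ℝ ↥(Pm m) := J 0 ⊔ J 1 ⊔ J 2 with hS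
  have hle : ∀ i, J i ≤ S.comap (LinearMap.id) := by
    intro i
    fin_cases i
    · exact le_sup_left.trans le_sup_left
    · exact le_sup_right.trans le_sup_left
    · exact le_sup_right
  set σ : ((i : Fin 3) → ↥(Pm m) ⧸ J i) →ₗ[ℝ] (↥(Pm m) ⧸ S) :=
    ∑ i : Fin 3, (Submodule.mapQ (J i) S LinearMap.id (hle i)).comp (LinearMap.proj i) with hσ
  have hσ_apply : ∀ g : Fin 3 → ↥(Pm m),
      σ (fun i => Submodule.Quotient.mk (g i)) =
        Submodule.Quotient.mk (g 0 + g 1 + g 2) := by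
    intro g
    simp [hσ, Fin.sum_univ_three, Submodule.mapQ_apply, Submodule.Quotient.mk_add]
  have hsurj : Function.Surjective σ := by
    intro y
    obtain ⟨p, rfl⟩ := Submodule.Quotient.mk_surjective S y
    refine ⟨fun i => Submodule.Quotient.mk (![p, 0, 0] i), ?_⟩
    rw [hσ_apply]
    simp
  have hker : LinearMap.range φ = LinearMap.ker σ := by
    apply le_antisymm
    · rintro a ⟨b, rfl⟩
      choose f hf using fun i => Submodule.Quotient.mk_surjective (K i) (b i)
      have hb : b = fun i => Submodule.Quotient.mk (f i) := by
        funext i; exact (hf i).symm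
      rw [LinearMap.mem_ker, hb, hφ_apply, hσ_apply]
      have h1 : (0 : Fin 3) + 1 = 1 := rfl
      have h2 : (1 : Fin 3) + 1 = 2 := rfl
      have h3 : (2 : Fin 3) + 1 = 0 := rfl
      rw [h1, h2, h3]
      have : f 1 - f 0 + (f 2 - f 1) + (f 0 - f 2) = 0 := by abel
      rw [this, Submodule.Quotient.mk_zero]
    · intro a ha
      choose g hg using fun i => Submodule.Quotient.mk_surjective (J i) (a i)
      have ha' : g 0 + g 1 + g 2 ∈ S := by
        rw [LinearMap.mem_ker] at ha
        have : σ (fun i => Submodule.Quotient.mk (g i)) = 0 := by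
          have : (fun i => Submodule.Quotient.mk (g i)) = a := funext hg
          rw [this, ha]
        rw [hσ_apply] at this
        exact (Submodule.Quotient.mk_eq_zero S).mp this
      rw [hS] at ha'
      obtain ⟨u, hu, j2, hj2, huv⟩ := Submodule.mem_sup.mp ha'
      obtain ⟨j0, hj0, j1, hj1, hu'⟩ := Submodule.mem_sup.mp hu
      set f : Fin 3 → ↥(Pm m) := ![0, g 0 - j0, g 0 + g 1 - j0 - j1] with hfdef
      have hf0 : f 0 = 0 := rfl
      have hf1 : f 1 = g 0 - j0 := rfl
      have hf2 : f 2 = g 0 + g 1 - j0 - j1 := rfl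
      have hmem : ∀ i : Fin 3, f (i + 1) - f i - g i ∈ J i := by
        intro i
        fin_cases i
        · show f 1 - f 0 - g 0 ∈ J 0
          have : f 1 - f 0 - g 0 = -j0 := by rw [hf0, hf1]; abel
          rw [this]; exact neg_mem hj0
        · show f 2 - f 1 - g 1 ∈ J 1
          have : f 2 - f 1 - g 1 = -j1 := by rw [hf1, hf2]; abel
          rw [this]; exact neg_mem hj1
        · show f 0 - f 2 - g 2 ∈ J 2
          have hj2' : j2 = g 0 + g 1 + g 2 - j0 - j1 := by rw [← huv, ← hu']; abel
          have : f 0 - f 2 - g 2 = -j2 := by rw [hf0, hf2, hj2']; abel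
          rw [this]; exact neg_mem hj2
      refine ⟨fun i => Submodule.Quotient.mk (f i), ?_⟩
      rw [hφ_apply]
      funext i
      rw [← hg i, Submodule.Quotient.eq]
      exact hmem i
  letI : Module ℝ ((i : Fin 3) → ↥(Pm m) ⧸ J i) :=
    @Pi.module (Fin 3) _ ℝ _ (fun i => (Submodule.Quotient.addCommGroup (J i)).toAddCommMonoid)
      (fun i => Submodule.Quotient.module (J i))
  exact ⟨(Submodule.quotEquivOfEq _ _ hker).trans (σ.quotKerEquivOfSurjective hsurj)⟩


end
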